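/- Let N ≥ 1 and let Π¹, …, Πᴺ be finite nonempty sets with product Π := Π¹ × ⋯ × Πᴺ. For each i, let λⁱ ∈ [0,1], let γⁱ, κⁱ ∈ (0,1), let BRⁱ be a map assigning to each π⁻ⁱ ∈ Π⁻ⁱ := ∏_{j≠i} Πʲ a nonempty subset of Πⁱ, and let hⁱ(· | πⁱ, Bⁱ) be a probability distribution on Πⁱ for each πⁱ ∈ Πⁱ and Bⁱ ⊆ Πⁱ. Define R^{i,λⁱ}(π̃ⁱ | πⁱ, Bⁱ) := 1 if πⁱ ∈ Bⁱ and π̃ⁱ = πⁱ; := λⁱ if πⁱ ∉ Bⁱ and π̃ⁱ = πⁱ; := (1 − λⁱ)/|Bⁱ| if πⁱ ∉ Bⁱ and π̃ⁱ ∈ Bⁱ; := 0 otherwise. Let T ⊆ Π be nonempty and suppose that π ∈ T implies πⁱ ∈ BRⁱ(π⁻ⁱ) for every i. Define a row-stochastic matrix A on Π by A(π, π̃) := ∏_{i=1}^N ν^i_π(π̃ⁱ), where ν^i_π := (1 − γⁱ)·R^{i,λⁱ}(· | πⁱ, BRⁱ(π⁻ⁱ)) + γⁱ·Unif(Πⁱ)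 if π ∈ T, and ν^i_π := (1 − κⁱ)·hⁱ(· | πⁱ, BRⁱ(π⁻ⁱ)) + κⁱ·Unif(Πⁱ) if π ∉ T. Then A has a unique stationary distribution μ* (i.e., μ* = μ*A), this μ* satisfies μ*(T) ≥ 1 − (Σ_{i=1}^N γⁱ)/(Σ_{i=1}^N γⁱ + ∏_{i=1}^N κⁱ/|Πⁱ|), and μ₀Aⁿ → μ* as n → ∞ for every probability vector μ₀ on Π. -/

import Mathlib

open Finset

/-- The inertial best-reply kernel `R^{i,λ}(· | π, B)`: stays at `π` if `π ∈ B`;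
otherwise stays with probability `λ` and moves to a uniformly chosen element of `B`
with probability `1 − λ`. -/
noncomputable def inertialKernel {α : Type*} [DecidableEq α]
    (lam : ℝ) (p : α) (B : Finset α) : α → ℝ :=
  fun q =>
    if p ∈ B then (if q = p then 1 else 0)
    else if q = p then lam
    else if q ∈ B then (1 - lam) / (B.card : ℝ)
    else 0

open Finset

/-- Weierstrass product inequality. -/
theorem my_one_sub_sum_le_prod {ι : Type*} (s : Finset ι) (f : ι → ℝ)
    (h0 : ∀ i ∈ s, 0 ≤ f i) (h1 : ∀ i ∈ s, f i ≤ 1) :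
    1 - ∑ i ∈ s, f i ≤ ∏ i ∈ s, (1 - f i) := by
  classical
  induction s using Finset.induction_on with
  | empty => simp
  | @insert a s ha ih =>
      rw [Finset.sum_insert ha, Finset.prod_insert ha]
      have h0a := h0 a (Finset.mem_insert_self a s)
      have h1a := h1 a (Finset.mem_insert_self a s)
      have ih' := ih (fun i hi => h0 i (Finset.mem_insert_of_mem hi))
        (fun i hi => h1 i (Finset.mem_insert_of_mem hi))
      have hs0 : 0 ≤ ∑ i ∈ s, f i := Finset.sum_nonneg fun i hi => h0 i (Finset.mem_insert_of_mem hi)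
      nlinarith [mul_le_mul_of_nonneg_left ih' (by linarith : (0:ℝ) ≤ 1 - f a)]

/-- Perron-Frobenius / ergodic theorem for a strictly positive row-stochastic matrix. -/
theorem markov_fixed {S : Type*} [Fintype S] [Nonempty S] (A : S → S → ℝ) (ε : ℝ)
    (hε : 0 < ε) (hAε : ∀ p q, ε ≤ A p q) (hrow : ∀ p, ∑ q, A p q = 1) :
    ∃ μstar : S → ℝ, (∀ p, 0 ≤ μstar p) ∧ (∑ p, μstar p = 1) ∧
      (∀ q, ∑ p, μstar p * A p q = μstar q) ∧
      (∀ ν : S → ℝ, (∀ p, 0 ≤ ν p) → (∑ p, ν p = 1) →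
        (∀ q, ∑ p, ν p * A p q = ν q) → ν = μstar) ∧
      (∀ μ0 : S → ℝ, (∀ p, 0 ≤ μ0 p) → (∑ p, μ0 p = 1) →
        ∀ seq : ℕ → S → ℝ, seq 0 = μ0 →
          (∀ n, seq (n + 1) = fun q => ∑ p, seq n p * A p q) →
          Filter.Tendsto seq Filter.atTop (nhds μstar)) := by
  classical
  set c : ℝ := 1 - (Fintype.card S : ℝ) * ε with hc_def
  have hcard : (0:ℝ) < (Fintype.card S : ℝ) := by
    exact_mod_cast Fintype.card_pos
  have hc1 : c < 1 := by
    have : 0 < (Fintype.card S : ℝ) * ε := mul_pos hcard hε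
    simp [hc_def]; linarith
  have hc0 : 0 ≤ c := by
    obtain ⟨p⟩ := ‹Nonempty S›
    have : (Fintype.card S : ℝ) * ε ≤ 1 := by
      have h1 : ∑ q : S, ε ≤ ∑ q : S, A p q :=
        Finset.sum_le_sum fun q _ => hAε p q
      rw [hrow p] at h1
      simpa [Finset.sum_const, nsmul_eq_mul] using h1
    simp [hc_def]; linarith
  set F : (S → ℝ) → (S → ℝ) := fun μ q => ∑ p, μ p * A p q with hF_def
  -- key contraction estimate
  have key : ∀ σ : S → ℝ, (∑ p, σ p = 0) →
      ∑ q, |F σ q| ≤ c * ∑ p, |σ p| := by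
    intro σ hσ
    have h1 : ∀ q, F σ q = ∑ p, σ p * (A p q - ε) := by
      intro q
      simp only [hF_def, mul_sub, Finset.sum_sub_distrib, ← Finset.sum_mul, hσ, zero_mul,
        sub_zero]
    calc ∑ q, |F σ q| ≤ ∑ q, ∑ p, |σ p| * (A p q - ε) := by
          refine Finset.sum_le_sum fun q _ => ?_
          rw [h1 q]
          refine (Finset.abs_sum_le_sum_abs _ _).trans (Finset.sum_le_sum fun p _ => ?_)
          have hge : |A p q - ε| = A p q - ε := abs_of_nonneg (by linarith [hAε p q])
          rw [abs_mul, hge]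
      _ = ∑ p, |σ p| * ∑ q, (A p q - ε) := by
          rw [Finset.sum_comm]
          exact Finset.sum_congr rfl fun p _ => (Finset.mul_sum _ _ _).symm
      _ = c * ∑ p, |σ p| := by
          rw [Finset.mul_sum]
          refine Finset.sum_congr rfl fun p _ => ?_
          rw [Finset.sum_sub_distrib, hrow p]
          simp [Finset.sum_const, nsmul_eq_mul, hc_def]; ring
  have hFsub : ∀ μ ν : S → ℝ, ∀ q, F μ q - F ν q = F (μ - ν) q := by
    intro μ ν q
    simp [hF_def, Finset.sum_sub_distrib, sub_mul]
  have contract : ∀ μ ν : S → ℝ, (∑ p, μ p = ∑ p, ν p) →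
      ∑ q, |F μ q - F ν q| ≤ c * ∑ p, |μ p - ν p| := by
    intro μ ν hsum
    have h0 : ∑ p, (μ - ν) p = 0 := by
      simp [Finset.sum_sub_distrib, hsum]
    have := key (μ - ν) h0
    simpa [hFsub μ ν] using this
  have hFpos : ∀ μ : S → ℝ, (∀ p, 0 ≤ μ p) → ∀ q, 0 ≤ F μ q := fun μ hμ q =>
    Finset.sum_nonneg fun p _ => mul_nonneg (hμ p) ((le_of_lt hε).trans (hAε p q))
  have hFsum : ∀ μ : S → ℝ, ∑ q, F μ q = ∑ p, μ p := by
    intro μ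
    simp only [hF_def]
    rw [Finset.sum_comm]
    exact Finset.sum_congr rfl fun p _ => by rw [← Finset.mul_sum, hrow p, mul_one]
  -- the iterated sequence from the uniform distribution
  set u : S → ℝ := fun _ => (Fintype.card S : ℝ)⁻¹ with hu_def
  set g : ℕ → S → ℝ := fun n => F^[n] u with hg_def
  have hg0 : g 0 = u := rfl
  have hgsucc : ∀ n, g (n + 1) = F (g n) := fun n => Function.iterate_succ_apply' F n u
  have hgprob : ∀ n, (∀ p, 0 ≤ g n p) ∧ (∑ p, g n p = 1) := by
    intro n
    induction n with
    | zero =>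
        constructor
        · intro p; rw [hg0]; positivity
        · rw [hg0]; simp [hu_def, Finset.sum_const, nsmul_eq_mul]
    | succ n ih =>
        rw [hgsucc n]
        exact ⟨hFpos _ ih.1, (hFsum _).trans ih.2⟩
  have habs2 : ∀ μ ν : S → ℝ, (∀ p, 0 ≤ μ p) → (∑ p, μ p = 1) →
      (∀ p, 0 ≤ ν p) → (∑ p, ν p = 1) → ∑ p, |μ p - ν p| ≤ 2 := by
    intro μ ν hμ0 hμ1 hν0 hν1
    calc ∑ p, |μ p - ν p| ≤ ∑ p, (μ p + ν p) := by
          refine Finset.sum_le_sum fun p _ => ?_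
          have := abs_sub_abs_le_abs_sub (μ p) (ν p)
          rw [abs_sub_le_iff]
          constructor <;> [skip; skip] <;>
            · have := hμ0 p; have := hν0 p; linarith
      _ = 2 := by rw [Finset.sum_add_distrib, hμ1, hν1]; norm_num
  have hgdist : ∀ n, ∑ q, |g (n + 1) q - g n q| ≤ 2 * c ^ n := by
    intro n
    induction n with
    | zero =>
        simpa using habs2 _ _ (hgprob 1).1 (hgprob 1).2 (hgprob 0).1 (hgprob 0).2
    | succ n ih =>
        have h1 : ∑ q, |F (g (n+1)) q - F (g n) q| ≤ c * ∑ p, |g (n+1) p - g n p| :=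
          contract _ _ ((hgprob (n+1)).2.trans (hgprob n).2.symm)
        rw [← hgsucc (n+1), ← hgsucc n] at h1
        calc ∑ q, |g (n + 1 + 1) q - g (n + 1) q| ≤ c * ∑ p, |g (n+1) p - g n p| := h1
          _ ≤ c * (2 * c ^ n) := mul_le_mul_of_nonneg_left ih hc0
          _ = 2 * c ^ (n + 1) := by ring
  -- pointwise abs bounded by the l1 sum
  have hpt : ∀ (μ ν : S → ℝ) (q : S), |μ q - ν q| ≤ ∑ p, |μ p - ν p| := by
    intro μ ν q
    exact Finset.single_le_sum (f := fun p => |μ p - ν p|)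
      (fun p _ => abs_nonneg (μ p - ν p)) (Finset.mem_univ q)
  have hcauchy : CauchySeq g := by
    apply cauchySeq_of_le_geometric c 2 hc1
    intro n
    rw [dist_pi_le_iff (by positivity)]
    intro q
    rw [Real.dist_eq]
    calc |g n q - g (n+1) q| = |g (n+1) q - g n q| := abs_sub_comm _ _
      _ ≤ ∑ p, |g (n+1) p - g n p| := hpt _ _ q
      _ ≤ 2 * c ^ n := hgdist n
  obtain ⟨μstar, hlim⟩ := cauchySeq_tendsto_of_complete hcauchy
  have hptlim : ∀ q, Filter.Tendsto (fun n => g n q) Filter.atTop (nhds (μstar q)) :=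
    fun q => tendsto_pi_nhds.mp hlim q
  have hμ0' : ∀ q, 0 ≤ μstar q := fun q =>
    ge_of_tendsto' (hptlim q) fun n => (hgprob n).1 q
  have hμ1' : ∑ p, μstar p = 1 := by
    have h1 : Filter.Tendsto (fun n => ∑ p, g n p) Filter.atTop (nhds (∑ p, μstar p)) :=
      tendsto_finset_sum _ fun p _ => hptlim p
    have h2 : (fun n => ∑ p, g n p) = fun _ => (1:ℝ) := funext fun n => (hgprob n).2
    rw [h2] at h1
    exact (tendsto_nhds_unique tendsto_const_nhds h1).symm
  have hstat : ∀ q, ∑ p, μstar p * A p q = μstar q := by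
    intro q
    have h1 : Filter.Tendsto (fun n => g (n + 1) q) Filter.atTop (nhds (μstar q)) :=
      (hptlim q).comp (Filter.tendsto_add_atTop_nat 1)
    have h2 : Filter.Tendsto (fun n => ∑ p, g n p * A p q) Filter.atTop
        (nhds (∑ p, μstar p * A p q)) :=
      tendsto_finset_sum _ fun p _ => (hptlim p).mul tendsto_const_nhds
    have h3 : (fun n => g (n + 1) q) = fun n => ∑ p, g n p * A p q := by
      funext n; rw [hgsucc n]
    rw [h3] at h1
    exact tendsto_nhds_unique h2 h1
  -- the l1 distance to μstar contracts
  have hdistc : ∀ μ : S → ℝ, (∑ p, μ p = 1) →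
      ∑ q, |F μ q - μstar q| ≤ c * ∑ p, |μ p - μstar p| := by
    intro μ hμ1
    have h1 := contract μ μstar (hμ1.trans hμ1'.symm)
    have h2 : ∀ q, F μstar q = μstar q := hstat
    calc ∑ q, |F μ q - μstar q| = ∑ q, |F μ q - F μstar q| := by
          exact Finset.sum_congr rfl fun q _ => by rw [h2 q]
      _ ≤ c * ∑ p, |μ p - μstar p| := h1
  have huniq : ∀ ν : S → ℝ, (∀ p, 0 ≤ ν p) → (∑ p, ν p = 1) →
      (∀ q, ∑ p, ν p * A p q = ν q) → ν = μstar := by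
    intro ν hν0 hν1 hνstat
    have h1 := hdistc ν hν1
    have h2 : ∀ q, F ν q = ν q := hνstat
    rw [show (∑ q, |F ν q - μstar q|) = ∑ q, |ν q - μstar q| from
      Finset.sum_congr rfl fun q _ => by rw [h2 q]] at h1
    have hD0 : (0:ℝ) ≤ ∑ q, |ν q - μstar q| :=
      Finset.sum_nonneg fun q _ => abs_nonneg (ν q - μstar q)
    have hD : ∑ q, |ν q - μstar q| = 0 := by nlinarith
    funext q
    have := (Finset.sum_eq_zero_iff_of_nonneg fun p _ => abs_nonneg (ν p - μstar p)).mp hD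
      q (Finset.mem_univ q)
    have := abs_eq_zero.mp this
    linarith
  refine ⟨μstar, hμ0', hμ1', hstat, huniq, ?_⟩
  intro μ0 hμ00 hμ01 seq hseq0 hseqrec
  have hseqF : ∀ n, seq (n + 1) = F (seq n) := fun n => hseqrec n
  have hseqprob : ∀ n, (∀ p, 0 ≤ seq n p) ∧ (∑ p, seq n p = 1) := by
    intro n
    induction n with
    | zero => rw [hseq0]; exact ⟨hμ00, hμ01⟩
    | succ n ih =>
        rw [hseqF n]
        exact ⟨hFpos _ ih.1, (hFsum _).trans ih.2⟩
  have hseqdist : ∀ n, ∑ q, |seq n q - μstar q| ≤ 2 * c ^ n := by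
    intro n
    induction n with
    | zero =>
        simpa using habs2 _ _ (hseqprob 0).1 (hseqprob 0).2 hμ0' hμ1'
    | succ n ih =>
        rw [hseqF n]
        calc ∑ q, |F (seq n) q - μstar q| ≤ c * ∑ p, |seq n p - μstar p| :=
              hdistc _ (hseqprob n).2
          _ ≤ c * (2 * c ^ n) := mul_le_mul_of_nonneg_left ih hc0
          _ = 2 * c ^ (n + 1) := by ring
  rw [tendsto_pi_nhds]
  intro q
  rw [tendsto_iff_dist_tendsto_zero]
  have hb : ∀ n, dist (seq n q) (μstar q) ≤ 2 * c ^ n := by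
    intro n
    rw [Real.dist_eq]
    exact (hpt _ _ q).trans (hseqdist n)
  have hb2 : Filter.Tendsto (fun n : ℕ => 2 * c ^ n) Filter.atTop (nhds 0) := by
    have := (tendsto_pow_atTop_nhds_zero_of_lt_one hc0 hc1).const_mul (2:ℝ)
    simpa using this
  exact squeeze_zero (fun n => dist_nonneg) hb hb2

/-- Lemma 2 (Idealized Update Procedure): with independent per-player transitions
given by the mixture `(1 − γⁱ) R^{i,λⁱ}(· | πⁱ, BRⁱ(π⁻ⁱ)) + γⁱ Unif(Πⁱ)` when
`π ∈ T` and `(1 − κⁱ) hⁱ(· | πⁱ, BRⁱ(π⁻ⁱ)) + κⁱ Unif(Πⁱ)` when `π ∉ T`, the induced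
chain `A` on `Π = Π¹ × ⋯ × Πᴺ` has a unique stationary distribution `μ*` with
`μ*(T) ≥ 1 − (Σᵢ γⁱ)/(Σᵢ γⁱ + ∏ᵢ κⁱ/|Πⁱ|)`, and `μ₀ Aⁿ → μ*` for every
probability vector `μ₀`. -/
theorem idealized_update_procedure
    {N : ℕ} (hN : 1 ≤ N) (PI : Fin N → Type*)
    [∀ i, Fintype (PI i)] [∀ i, Nonempty (PI i)] [∀ i, DecidableEq (PI i)]
    (lam : Fin N → ℝ) (hlam : ∀ i, lam i ∈ Set.Icc (0 : ℝ) 1)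
    (γ κ : Fin N → ℝ)
    (hγ : ∀ i, γ i ∈ Set.Ioo (0 : ℝ) 1) (hκ : ∀ i, κ i ∈ Set.Ioo (0 : ℝ) 1)
    (BR : ∀ i : Fin N, (∀ j, PI j) → Finset (PI i))
    (hBRne : ∀ i π, (BR i π).Nonempty)
    (hBRdep : ∀ i, ∀ π π' : ∀ j, PI j, (∀ j, j ≠ i → π j = π' j) → BR i π = BR i π')
    (h : ∀ i : Fin N, PI i → Finset (PI i) → PI i → ℝ)
    (hh0 : ∀ i p B q, 0 ≤ h i p B q) (hh1 : ∀ i p B, ∑ q, h i p B q = 1)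
    (T : Finset (∀ j, PI j)) (hTne : T.Nonempty)
    (hTBR : ∀ π ∈ T, ∀ i, π i ∈ BR i π)
    (A : (∀ j, PI j) → (∀ j, PI j) → ℝ)
    (hA : ∀ π π', A π π' =
      ∏ i, (if π ∈ T then
          (1 - γ i) * inertialKernel (lam i) (π i) (BR i π) (π' i) +
            γ i * (1 / (Fintype.card (PI i) : ℝ))
        else
          (1 - κ i) * h i (π i) (BR i π) (π' i) +
            κ i * (1 / (Fintype.card (PI i) : ℝ)))) :
    ∃ μstar : (∀ j, PI j) → ℝ,
      (∀ π, 0 ≤ μstar π) ∧ (∑ π, μstar π = 1) ∧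
      (∀ π', ∑ π, μstar π * A π π' = μstar π') ∧
      (∀ ν : (∀ j, PI j) → ℝ, (∀ π, 0 ≤ ν π) → (∑ π, ν π = 1) →
        (∀ π', ∑ π, ν π * A π π' = ν π') → ν = μstar) ∧
      (1 - (∑ i, γ i) / ((∑ i, γ i) + ∏ i, κ i / (Fintype.card (PI i) : ℝ)) ≤
        ∑ π ∈ T, μstar π) ∧
      (∀ μ0 : (∀ j, PI j) → ℝ, (∀ π, 0 ≤ μ0 π) → (∑ π, μ0 π = 1) →
        ∀ seq : ℕ → (∀ j, PI j) → ℝ, seq 0 = μ0 →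
          (∀ n, seq (n + 1) = fun π' => ∑ π, seq n π * A π π') →
          Filter.Tendsto seq Filter.atTop (nhds μstar)) := by
  classical
  have hcardpos : ∀ i, (0:ℝ) < (Fintype.card (PI i) : ℝ) := fun i => by
    exact_mod_cast Fintype.card_pos
  -- the per-player transition kernel
  set f : (∀ j, PI j) → ∀ i : Fin N, PI i → ℝ := fun π i q =>
    if π ∈ T then
      (1 - γ i) * inertialKernel (lam i) (π i) (BR i π) q +
        γ i * (1 / (Fintype.card (PI i) : ℝ))
    else
      (1 - κ i) * h i (π i) (BR i π) q +
        κ i * (1 / (Fintype.card (PI i) : ℝ)) with hf_def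
  have hAf : ∀ π π', A π π' = ∏ i, f π i (π' i) := fun π π' => hA π π'
  -- properties of the inertial kernel
  have hIK0 : ∀ (i : Fin N) (p : PI i) (B : Finset (PI i)), B.Nonempty →
      ∀ q, 0 ≤ inertialKernel (lam i) p B q := by
    intro i p B hB q
    have h0 := (hlam i).1
    have h1 := (hlam i).2
    have hBc : (0:ℝ) < B.card := by exact_mod_cast hB.card_pos
    unfold inertialKernel
    split_ifs
    · norm_num
    · norm_num
    · linarith
    · exact div_nonneg (by linarith) hBc.le
    · norm_num
  have hIK1 : ∀ (i : Fin N) (p : PI i) (B : Finset (PI i)), B.Nonempty →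
      ∑ q, inertialKernel (lam i) p B q = 1 := by
    intro i p B hB
    have hBc : (0:ℝ) < B.card := by exact_mod_cast hB.card_pos
    unfold inertialKernel
    by_cases hp : p ∈ B
    · simp [hp]
    · simp only [hp, if_false]
      rw [← Finset.add_sum_erase _ _ (Finset.mem_univ p)]
      rw [if_pos rfl]
      have h2 : ∑ q ∈ Finset.univ.erase p,
          (if q = p then lam i else if q ∈ B then (1 - lam i) / (B.card : ℝ) else 0)
          = ∑ q ∈ Finset.univ.erase p,
            (if q ∈ B then (1 - lam i) / (B.card : ℝ) else 0) :=
        Finset.sum_congr rfl fun q hq => if_neg (Finset.ne_of_mem_erase hq)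
      rw [h2, Finset.sum_erase _ (by simp [hp])]
      rw [Finset.sum_ite_mem, Finset.univ_inter, Finset.sum_const, nsmul_eq_mul]
      field_simp
      ring
  -- lower bound and row-sum for the factors
  have hflow : ∀ π (i : Fin N) q,
      min (γ i) (κ i) / (Fintype.card (PI i) : ℝ) ≤ f π i q := by
    intro π i q
    have hγi := hγ i
    have hκi := hκ i
    simp only [hf_def]
    split_ifs with hT
    · have h1 : 0 ≤ (1 - γ i) * inertialKernel (lam i) (π i) (BR i π) q :=
        mul_nonneg (by linarith [hγi.2]) (hIK0 i _ _ (hBRne i π) q)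
      have h2 : min (γ i) (κ i) / (Fintype.card (PI i) : ℝ)
          ≤ γ i * (1 / (Fintype.card (PI i) : ℝ)) := by
        rw [mul_one_div]
        gcongr
        exact min_le_left _ _
      linarith
    · have h1 : 0 ≤ (1 - κ i) * h i (π i) (BR i π) q :=
        mul_nonneg (by linarith [hκi.2]) (hh0 i _ _ q)
      have h2 : min (γ i) (κ i) / (Fintype.card (PI i) : ℝ)
          ≤ κ i * (1 / (Fintype.card (PI i) : ℝ)) := by
        rw [mul_one_div]
        gcongr
        exact min_le_right _ _
      linarith
  have hfsum : ∀ π (i : Fin N), ∑ q, f π i q = 1 := by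
    intro π i
    have hc := hcardpos i
    simp only [hf_def]
    split_ifs with hT
    · rw [Finset.sum_add_distrib, ← Finset.mul_sum, hIK1 i _ _ (hBRne i π),
        Finset.sum_const, nsmul_eq_mul]
      field_simp
      rw [Finset.card_univ]; ring
    · rw [Finset.sum_add_distrib, ← Finset.mul_sum, hh1 i _ _,
        Finset.sum_const, nsmul_eq_mul]
      field_simp
      rw [Finset.card_univ]; ring
  have hrow : ∀ π, ∑ π', A π π' = 1 := by
    intro π
    calc ∑ π', A π π' = ∑ π' : (∀ j, PI j), ∏ i, f π i (π' i) :=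
          Finset.sum_congr rfl fun π' _ => hAf π π'
      _ = ∏ i, ∑ q, f π i q := (Fintype.prod_sum fun i q => f π i q).symm
      _ = 1 := by
          rw [Finset.prod_congr rfl fun i _ => hfsum π i]
          simp
  set ε : ℝ := ∏ i, min (γ i) (κ i) / (Fintype.card (PI i) : ℝ) with hε_def
  have hε : 0 < ε :=
    Finset.prod_pos fun i _ => div_pos (lt_min (hγ i).1 (hκ i).1) (hcardpos i)
  have hAε : ∀ π π', ε ≤ A π π' := by
    intro π π'
    rw [hAf]
    exact Finset.prod_le_prod
      (fun i _ => (div_pos (lt_min (hγ i).1 (hκ i).1) (hcardpos i)).le)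
      (fun i _ => hflow π i (π' i))
  obtain ⟨μstar, hμ0, hμ1, hstat, huniq, hconv⟩ :=
    markov_fixed A ε hε hAε hrow
  refine ⟨μstar, hμ0, hμ1, hstat, huniq, ?_, hconv⟩
  -- the bound on μ*(T)
  have hNfin : Nonempty (Fin N) := ⟨⟨0, hN⟩⟩
  set G : ℝ := ∑ i, γ i with hG_def
  set P : ℝ := ∏ i, κ i / (Fintype.card (PI i) : ℝ) with hP_def
  have hG : 0 < G :=
    Finset.sum_pos (fun i _ => (hγ i).1) Finset.univ_nonempty
  have hP : 0 < P :=
    Finset.prod_pos fun i _ => div_pos (hκ i).1 (hcardpos i)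
  set y : ℝ := ∑ π ∈ T, μstar π with hy_def
  set x : ℝ := ∑ π ∈ Tᶜ, μstar π with hx_def
  have hxy : y + x = 1 := by
    rw [hy_def, hx_def, Finset.sum_add_sum_compl, hμ1]
  -- exit probabilities
  have hA0 : ∀ π π', 0 ≤ A π π' := fun π π' => hε.le.trans (hAε π π')
  have hcompl : ∀ π, ∑ π' ∈ Tᶜ, A π π' = 1 - ∑ π' ∈ T, A π π' := by
    intro π
    have := Finset.sum_add_sum_compl T (fun π' => A π π')
    rw [hrow π] at this
    linarith
  have hrT : ∀ π ∈ T, ∑ π' ∈ Tᶜ, A π π' ≤ G := by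
    intro π hπ
    rw [hcompl π]
    have hdiag : 1 - G ≤ A π π := by
      rw [hAf]
      calc (1:ℝ) - G ≤ ∏ i, (1 - γ i) :=
            my_one_sub_sum_le_prod Finset.univ γ (fun i _ => (hγ i).1.le)
              (fun i _ => (hγ i).2.le)
        _ ≤ ∏ i, f π i (π i) := by
            refine Finset.prod_le_prod (fun i _ => by linarith [(hγ i).2]) fun i _ => ?_
            have hIKeq : inertialKernel (lam i) (π i) (BR i π) (π i) = 1 := by
              unfold inertialKernel
              rw [if_pos (hTBR π hπ i), if_pos rfl]
            simp only [hf_def, if_pos hπ, hIKeq, mul_one]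
            have := hcardpos i
            have h2 : 0 ≤ γ i * (1 / (Fintype.card (PI i) : ℝ)) :=
              mul_nonneg (hγ i).1.le (by positivity)
            linarith
    have hsum : A π π ≤ ∑ π' ∈ T, A π π' :=
      Finset.single_le_sum (f := fun π' => A π π') (fun π' _ => hA0 π π') hπ
    linarith
  have hrTc : ∀ π, π ∉ T → ∑ π' ∈ Tᶜ, A π π' ≤ 1 - P := by
    intro π hπ
    rw [hcompl π]
    obtain ⟨τ, hτ⟩ := hTne
    have hAτ : P ≤ A π τ := by
      rw [hAf, hP_def]
      refine Finset.prod_le_prod (fun i _ => (div_pos (hκ i).1 (hcardpos i)).le)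
        fun i _ => ?_
      simp only [hf_def, if_neg hπ]
      have h1 : 0 ≤ (1 - κ i) * h i (π i) (BR i π) (τ i) :=
        mul_nonneg (by linarith [(hκ i).2]) (hh0 i _ _ _)
      rw [div_eq_mul_one_div]
      linarith
    have hsum : A π τ ≤ ∑ π' ∈ T, A π π' :=
      Finset.single_le_sum (f := fun π' => A π π') (fun π' _ => hA0 π π') hτ
    linarith
  -- stationarity summed over the complement of T
  have hswap : x = ∑ π, μstar π * ∑ π' ∈ Tᶜ, A π π' := by
    calc x = ∑ π' ∈ Tᶜ, ∑ π, μstar π * A π π' :=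
          Finset.sum_congr rfl fun π' _ => (hstat π').symm
      _ = ∑ π, ∑ π' ∈ Tᶜ, μstar π * A π π' := Finset.sum_comm
      _ = ∑ π, μstar π * ∑ π' ∈ Tᶜ, A π π' :=
          Finset.sum_congr rfl fun π _ => (Finset.mul_sum _ _ _).symm
  have hxbound : x ≤ G * y + (1 - P) * x := by
    conv_lhs => rw [hswap, ← Finset.sum_add_sum_compl T
      (fun π => μstar π * ∑ π' ∈ Tᶜ, A π π')]
    have h1 : ∑ π ∈ T, μstar π * ∑ π' ∈ Tᶜ, A π π' ≤ G * y := by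
      rw [hy_def, Finset.mul_sum]
      exact Finset.sum_le_sum fun π hπ => by
        rw [mul_comm (G) (μstar π)]
        exact mul_le_mul_of_nonneg_left (hrT π hπ) (hμ0 π)
    have h2 : ∑ π ∈ Tᶜ, μstar π * ∑ π' ∈ Tᶜ, A π π' ≤ (1 - P) * x := by
      rw [hx_def, Finset.mul_sum]
      exact Finset.sum_le_sum fun π hπ => by
        rw [mul_comm (1 - P) (μstar π)]
        exact mul_le_mul_of_nonneg_left (hrTc π (Finset.mem_compl.mp hπ)) (hμ0 π)
    linarith
  -- conclude
  have hyP : P / (G + P) ≤ y := by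
    rw [div_le_iff₀ (by positivity)]
    nlinarith
  have heq : 1 - G / (G + P) = P / (G + P) := by
    field_simp
    ring
  rw [heq]
  exact hyP
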